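/- arXiv:1311.4891 — 5 statements merged into one kernel-verified Lean document; each statement's English description precedes it below -/
import Mathlib

section
/- Let (A, B) be a co-t-structure on a triangulated category T with co-heart S = A ∩ Σ⁻¹B. Then S * ΣS = ΣA ∩ Σ⁻¹B, where S * ΣS denotes the full subcategory of objects t admitting a distinguished triangle s₁ → s₀ → t → Σs₁ with s₀, s₁ ∈ S. -/
open CategoryTheory Category Limits Pretriangulated

variable {C : Type*} [Category C] [Preadditive C] [HasZeroObject C] [HasShift C ℤ]
  [∀ n : ℤ, (shiftFunctor C n).Additive] [Pretriangulated C]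

/-- A co-t-structure on a triangulated category: a pair of full subcategories (given by
their classes of objects) closed under direct summands, with `Σ⁻¹A ⊆ A`, `ΣB ⊆ B`,
`Hom(A, B) = 0`, and every object sitting in a triangle `a → t → b → Σa`. -/
structure CoTStructure (A B : Set C) : Prop where
  summandA : ∀ x y : C, (∃ (i : x ⟶ y) (r : y ⟶ x), i ≫ r = 𝟙 x) → y ∈ A → x ∈ A
  summandB : ∀ x y : C, (∃ (i : x ⟶ y) (r : y ⟶ x), i ≫ r = 𝟙 x) → y ∈ B → x ∈ B
  shiftA : ∀ x ∈ A, x⟦(-1 : ℤ)⟧ ∈ A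
  shiftB : ∀ x ∈ B, x⟦(1 : ℤ)⟧ ∈ B
  orth : ∀ a ∈ A, ∀ b ∈ B, ∀ f : a ⟶ b, f = 0
  tri : ∀ t : C, ∃ (a b : C) (_ : a ∈ A) (_ : b ∈ B) (f : a ⟶ t) (g : t ⟶ b)
    (h : b ⟶ a⟦(1 : ℤ)⟧), Triangle.mk f g h ∈ distTriang C

/-- The co-heart `A ∩ Σ⁻¹B` of a co-t-structure. -/
def coheart (A B : Set C) : Set C := {x | x ∈ A ∧ x⟦(1 : ℤ)⟧ ∈ B}

/-- `S * T`: objects `e` admitting a distinguished triangle `s → e → t → Σs`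
with `s ∈ S`, `t ∈ T`. -/
def starSet (S T : Set C) : Set C :=
  {e | ∃ (s t : C) (_ : s ∈ S) (_ : t ∈ T) (f : s ⟶ e) (g : e ⟶ t)
    (h : t ⟶ s⟦(1 : ℤ)⟧), Triangle.mk f g h ∈ distTriang C}

/-- `ΣS`, described as those `x` with `Σ⁻¹x ∈ S`. -/
def shiftSet (S : Set C) : Set C := {x | x⟦(-1 : ℤ)⟧ ∈ S}

/-- `S * ΣS`: objects `t` admitting a distinguished triangle `s₁ → s₀ → t → Σs₁`
with `s₀, s₁ ∈ S`. -/
def twoTermSet (S : Set C) : Set C :=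
  {t | ∃ (s₁ s₀ : C) (_ : s₁ ∈ S) (_ : s₀ ∈ S) (f : s₁ ⟶ s₀) (g : s₀ ⟶ t)
    (h : t ⟶ s₁⟦(1 : ℤ)⟧), Triangle.mk f g h ∈ distTriang C}

/-- Membership in `A` is characterized by left-orthogonality to `B`. -/
lemma memA_of_orth {A B : Set C} (h : CoTStructure A B) {y : C}
    (hy : ∀ b ∈ B, ∀ f : y ⟶ b, f = 0) : y ∈ A := by
  obtain ⟨a, b, ha, hb, f, g, hh, hT⟩ := h.tri y
  obtain ⟨r, hr⟩ := Triangle.coyoneda_exact₂ _ hT (𝟙 y)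
    (by simp [Triangle.mk, hy b hb g]; rfl)
  exact h.summandA y a ⟨r, f, hr.symm⟩ ha

/-- Membership in `B` is characterized by right-orthogonality to `A`. -/
lemma memB_of_orth {A B : Set C} (h : CoTStructure A B) {y : C}
    (hy : ∀ a ∈ A, ∀ f : a ⟶ y, f = 0) : y ∈ B := by
  obtain ⟨a, b, ha, hb, f, g, hh, hT⟩ := h.tri y
  obtain ⟨r, hr⟩ := Triangle.yoneda_exact₂ _ hT (𝟙 y)
    (by simp [Triangle.mk, hy a ha f]; rfl)
  exact h.summandB y b ⟨g, r, hr.symm⟩ hb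

/-- `A` is closed under isomorphism. -/
lemma isoA {A B : Set C} (h : CoTStructure A B) {x y : C} (e : x ≅ y) (hy : y ∈ A) : x ∈ A :=
  h.summandA x y ⟨e.hom, e.inv, e.hom_inv_id⟩ hy

/-- `B` is closed under isomorphism. -/
lemma isoB {A B : Set C} (h : CoTStructure A B) {x y : C} (e : x ≅ y) (hy : y ∈ B) : x ∈ B :=
  h.summandB x y ⟨e.hom, e.inv, e.hom_inv_id⟩ hy

/-- `A` is closed under extensions. -/
lemma extA {A B : Set C} (h : CoTStructure A B) (T : Triangle C) (hT : T ∈ distTriang C)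
    (h1 : T.obj₁ ∈ A) (h3 : T.obj₃ ∈ A) : T.obj₂ ∈ A := by
  apply memA_of_orth h
  intro b hb f
  have h0 : T.mor₁ ≫ f = 0 := h.orth _ h1 _ hb _
  obtain ⟨g, hg⟩ := Triangle.yoneda_exact₂ _ hT f h0
  rw [hg, h.orth _ h3 _ hb g, comp_zero]

/-- `B` is closed under extensions. -/
lemma extB {A B : Set C} (h : CoTStructure A B) (T : Triangle C) (hT : T ∈ distTriang C)
    (h1 : T.obj₁ ∈ B) (h3 : T.obj₃ ∈ B) : T.obj₂ ∈ B := by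
  apply memB_of_orth h
  intro a ha f
  have h0 : f ≫ T.mor₂ = 0 := h.orth _ ha _ h3 _
  obtain ⟨g, hg⟩ := Triangle.coyoneda_exact₂ _ hT f h0
  rw [hg, h.orth _ ha _ h1 g, zero_comp]

/-- For a co-t-structure `(A, B)` with co-heart `S = A ∩ Σ⁻¹B`, one has
`S * ΣS = ΣA ∩ Σ⁻¹B`. -/
theorem stmt_2 (A B : Set C) (h : CoTStructure A B) :
    twoTermSet (coheart A B) = {t : C | t⟦(-1 : ℤ)⟧ ∈ A ∧ t⟦(1 : ℤ)⟧ ∈ B} := by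
  ext t
  constructor
  · rintro ⟨s₁, s₀, ⟨hs₁A, hs₁B⟩, ⟨hs₀A, hs₀B⟩, f, g, hh, hT⟩
    constructor
    · -- t⟦-1⟧ ∈ A : middle of rotate (shift (-1) T)
      have hT' := rot_of_distTriang _ (Pretriangulated.Triangle.shift_distinguished _ hT (-1))
      refine extA h _ hT' ?_ ?_
      · exact h.shiftA _ hs₀A
      · exact isoA h ((shiftFunctorCompIsoId C (-1) 1 (by ring)).app s₁) hs₁A
    · -- t⟦1⟧ ∈ B : middle of shift 1 (rotate T)
      have hT' := Pretriangulated.Triangle.shift_distinguished _ (rot_of_distTriang _ hT) 1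
      refine extB h _ hT' ?_ ?_
      · exact hs₀B
      · exact h.shiftB _ hs₁B
  · rintro ⟨ht1, ht2⟩
    obtain ⟨a, b, ha, hb, f, g, hh, hT⟩ := h.tri t
    -- a⟦1⟧ ∈ B : middle of rotate (rotate T)
    have haB : a⟦(1 : ℤ)⟧ ∈ B := by
      refine extB h _ (rot_of_distTriang _ (rot_of_distTriang _ hT)) hb ht2
    -- b⟦-1⟧ ∈ A : middle of invRotate (invRotate T)
    have hbA : b⟦(-1 : ℤ)⟧ ∈ A := by
      refine extA h _ (inv_rot_of_distTriang _ (inv_rot_of_distTriang _ hT)) ht1 ha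
    have hbB : (b⟦(-1 : ℤ)⟧)⟦(1 : ℤ)⟧ ∈ B :=
      isoB h ((shiftFunctorCompIsoId C (-1) 1 (by ring)).app b) hb
    exact ⟨b⟦(-1 : ℤ)⟧, a, ⟨hbA, hbB⟩, ⟨ha, haB⟩,
      ((Triangle.mk f g hh).invRotate).mor₁, ((Triangle.mk f g hh).invRotate).mor₂,
      ((Triangle.mk f g hh).invRotate).mor₃, inv_rot_of_distTriang _ hT⟩
end

section
/- Let (A, B) and (A', B') be co-t-structures on a triangulated category T. If A ⊆ A' ⊆ ΣA, then ΣB ⊆ B' ⊆ B, and the co-heart S' = A' ∩ Σ⁻¹B' of (A', B') is contained in S * ΣS, where S is the co-heart of (A, B). -/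
open CategoryTheory Category Limits Pretriangulated

variable {C : Type*} [Category C] [Preadditive C] [HasZeroObject C] [HasShift C ℤ]
  [∀ n : ℤ, (shiftFunctor C n).Additive] [Pretriangulated C]

/-- An object receiving no nonzero maps from `A` lies in `B`. -/
lemma mem_B_of_orth {A B : Set C} (h : CoTStructure A B) (t : C)
    (ht : ∀ a ∈ A, ∀ f : a ⟶ t, f = 0) : t ∈ B := by
  obtain ⟨a, b, ha, hb, f, g, hh, hT⟩ := h.tri t
  obtain ⟨r, hr⟩ := Pretriangulated.Triangle.yoneda_exact₂ _ hT (𝟙 t)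
    (by simp [ht a ha f]; exact zero_comp)
  exact h.summandB t b ⟨g, r, hr.symm⟩ hb

/-- An object admitting no nonzero maps to `B` lies in `A`. -/
lemma mem_A_of_orth {A B : Set C} (h : CoTStructure A B) (t : C)
    (ht : ∀ b ∈ B, ∀ f : t ⟶ b, f = 0) : t ∈ A := by
  obtain ⟨a, b, ha, hb, f, g, hh, hT⟩ := h.tri t
  obtain ⟨s, hs⟩ := Pretriangulated.Triangle.coyoneda_exact₂ _ hT (𝟙 t)
    (by simp [ht b hb g]; exact comp_zero)
  exact h.summandA t a ⟨s, f, hs.symm⟩ ha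

/-- If `(A, B)` and `(A', B')` are co-t-structures with `A ⊆ A' ⊆ ΣA`, then
`ΣB ⊆ B' ⊆ B` and the co-heart of `(A', B')` is contained in `S * ΣS`,
where `S` is the co-heart of `(A, B)`. -/
theorem stmt_5 (A B A' B' : Set C) (h : CoTStructure A B) (h' : CoTStructure A' B')
    (h₁ : A ⊆ A') (h₂ : ∀ x ∈ A', x⟦(-1 : ℤ)⟧ ∈ A) :
    (∀ x ∈ B, x⟦(1 : ℤ)⟧ ∈ B') ∧ B' ⊆ B ∧
    coheart A' B' ⊆ twoTermSet (coheart A B) := by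
  refine ⟨?_, ?_, ?_⟩
  · -- ΣB ⊆ B'
    intro b hb
    apply mem_B_of_orth h'
    intro a' ha' f
    have e := (shiftFunctorCompIsoId C (1 : ℤ) (-1 : ℤ) (by ring)).app b
    have hz : (shiftFunctor C (-1 : ℤ)).map f ≫ e.hom = 0 :=
      h.orth _ (h₂ a' ha') b hb _
    have hz' : (shiftFunctor C (-1 : ℤ)).map f = 0 := by
      have := congrArg (fun g => g ≫ e.inv) hz
      simpa using this
    apply (shiftFunctor C (-1 : ℤ)).map_injective
    rw [hz', Functor.map_zero]
  · -- B' ⊆ B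
    intro b' hb'
    exact mem_B_of_orth h b' (fun a ha f => h'.orth a (h₁ ha) b' hb' f)
  · -- coheart A' B' ⊆ twoTermSet (coheart A B)
    rintro x ⟨hx₁, hx₂⟩
    obtain ⟨a, b, ha, hb, f, g, hh, hT⟩ := h.tri x
    set T := Triangle.mk f g hh with hTdef
    -- a⟦1⟧ ∈ B
    have haB : a⟦(1 : ℤ)⟧ ∈ B := by
      apply mem_B_of_orth h
      intro a₀ ha₀ φ
      have hTrr := rot_of_distTriang _ (rot_of_distTriang _ hT)
      have hφ : φ ≫ (T.rotate.rotate).mor₂ = 0 := by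
        have : φ ≫ (shiftFunctor C (1 : ℤ)).map f = 0 :=
          h'.orth a₀ (h₁ ha₀) _ hx₂ _
        dsimp [T, Triangle.rotate]
        simp [this]
        exact (Preadditive.comp_neg φ _).trans ((congrArg Neg.neg this).trans neg_zero)
      obtain ⟨ψ, hψ⟩ := Pretriangulated.Triangle.coyoneda_exact₂ _ hTrr φ hφ
      rw [hψ, h.orth a₀ ha₀ b hb ψ]
      exact zero_comp
    -- b⟦-1⟧ ∈ A
    have hbA : b⟦(-1 : ℤ)⟧ ∈ A := by
      apply mem_A_of_orth h
      intro y hy φ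
      have hTii := inv_rot_of_distTriang _ (inv_rot_of_distTriang _ hT)
      have hφ : (T.invRotate.invRotate).mor₁ ≫ φ = 0 := by
        apply h.orth _ ?_ y hy
        exact h₂ x hx₁
      obtain ⟨ψ, hψ⟩ := Pretriangulated.Triangle.yoneda_exact₂ _ hTii φ hφ
      rw [hψ, h.orth a ha y hy ψ]
      exact comp_zero
    -- b⟦-1⟧⟦1⟧ ∈ B via the iso b⟦-1⟧⟦1⟧ ≅ b
    have hbS : b⟦(-1 : ℤ)⟧⟦(1 : ℤ)⟧ ∈ B := by
      have e := (shiftFunctorCompIsoId C (-1 : ℤ) (1 : ℤ) (by ring)).app b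
      exact h.summandB _ b ⟨e.hom, e.inv, e.hom_inv_id⟩ hb
    exact ⟨b⟦(-1 : ℤ)⟧, a, ⟨hbA, hbS⟩, ⟨ha, haB⟩,
      T.invRotate.mor₁, T.invRotate.mor₂, T.invRotate.mor₃,
      inv_rot_of_distTriang _ hT⟩
end

section
/- Let T be a triangulated category and let u, u' be objects of S * ΣS for a presilting subcategory S of T (i.e., u, u' admit distinguished triangles s₁ → s₀ → u → Σs₁ and s₁' → s₀' → u' → Σs₁' with all sᵢ, sᵢ' ∈ S). Then Hom_T(u, Σⁱ u') = 0 for all i ≥ 2. -/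
open CategoryTheory Category Limits Pretriangulated

variable {C : Type*} [Category C] [Preadditive C] [HasZeroObject C] [HasShift C ℤ]
  [∀ n : ℤ, (shiftFunctor C n).Additive] [Pretriangulated C]

/-- A class of objects `S` is presilting if `Hom(s, Σⁱ s') = 0` for all `s, s' ∈ S`, `i ≥ 1`. -/
def PresiltingSet (S : Set C) : Prop :=
  ∀ s ∈ S, ∀ s' ∈ S, ∀ i : ℤ, 1 ≤ i → ∀ f : s ⟶ s'⟦i⟧, f = 0

/-- A class of objects closed under isomorphisms, shifts in both directions,
extensions, and direct summands: a "thick" class. -/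
def IsThickSet (P : Set C) : Prop :=
  (∀ x y : C, Nonempty (x ≅ y) → x ∈ P → y ∈ P) ∧
  (∀ x ∈ P, x⟦(1 : ℤ)⟧ ∈ P) ∧
  (∀ x ∈ P, x⟦(-1 : ℤ)⟧ ∈ P) ∧
  (∀ (x y z : C) (f : x ⟶ y) (g : y ⟶ z) (w : z ⟶ x⟦(1 : ℤ)⟧),
    Triangle.mk f g w ∈ (distTriang C) → x ∈ P → z ∈ P → y ∈ P) ∧
  (∀ x y : C, (∃ (i : x ⟶ y) (r : y ⟶ x), i ≫ r = 𝟙 x) → y ∈ P → x ∈ P)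

/-- `S` generates `T` as a thick subcategory: the smallest thick class containing `S`
is all of `T`. -/
def GeneratesThick (S : Set C) : Prop :=
  ∀ P : Set C, IsThickSet P → S ⊆ P → ∀ x : C, x ∈ P

/-- A silting subcategory: a presilting class whose thick closure is everything. -/
def SiltingSet (S : Set C) : Prop := PresiltingSet S ∧ GeneratesThick S

lemma hom_zero_aux (S : Set C) (hS : PresiltingSet S) {s u' : C} (hs : s ∈ S)
    (hu' : u' ∈ twoTermSet S) : ∀ j : ℤ, 1 ≤ j → ∀ f : s ⟶ u'⟦j⟧, f = 0 := by
  intro j hj f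
  obtain ⟨s₁, s₀, hs₁, hs₀, a, b, c, hT⟩ := hu'
  have hT' := Pretriangulated.Triangle.shift_distinguished _ hT j
  set T' := (shiftFunctor (Pretriangulated.Triangle C) j).obj (Triangle.mk a b c) with hT'def
  have hobj₃ : T'.obj₃ = u'⟦j⟧ := rfl
  have hobj₂ : T'.obj₂ = s₀⟦j⟧ := rfl
  have hobj₁ : T'.obj₁ = s₁⟦j⟧ := rfl
  -- f ≫ T'.mor₃ = 0 since it lands in s₁⟦j⟧⟦1⟧ ≅ s₁⟦j+1⟧
  have key : f ≫ T'.mor₃ = 0 := by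
    have e : s₁⟦j⟧⟦(1 : ℤ)⟧ ≅ s₁⟦j + 1⟧ :=
      ((shiftFunctorAdd' C j 1 (j + 1) rfl).symm).app s₁
    have h0 : f ≫ T'.mor₃ ≫ e.hom = 0 := hS s hs s₁ hs₁ (j + 1) (by omega) _
    exact (cancel_mono e.hom).1 ((Category.assoc _ _ _).trans (h0.trans (zero_comp).symm))
  obtain ⟨g, hg⟩ := Pretriangulated.Triangle.coyoneda_exact₃ T' hT' f key
  have hg0 : g = 0 := hS s hs s₀ hs₀ j hj g
  rw [hg, hg0, zero_comp]; rfl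

/-- If `S` is presilting and `u, u' ∈ S * ΣS`, then `Hom(u, Σⁱ u') = 0` for `i ≥ 2`. -/
theorem stmt_6 (S : Set C) (hS : PresiltingSet S) (u u' : C)
    (hu : u ∈ twoTermSet S) (hu' : u' ∈ twoTermSet S) :
    ∀ i : ℤ, 2 ≤ i → ∀ f : u ⟶ u'⟦i⟧, f = 0 := by
  intro i hi f
  obtain ⟨s₁, s₀, hs₁, hs₀, a, b, c, hT⟩ := hu
  have hbf : b ≫ f = 0 := hom_zero_aux S hS hs₀ hu' i (by omega) _
  obtain ⟨g, hg⟩ := Pretriangulated.Triangle.yoneda_exact₃ (Triangle.mk a b c) hT f hbf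
  -- g : s₁⟦1⟧ ⟶ u'⟦i⟧; show g = 0
  have e : u'⟦i⟧ ≅ u'⟦i - 1⟧⟦(1 : ℤ)⟧ := (shiftFunctorAdd' C (i - 1) 1 i (by ring)).app u'
  have hfull : ∃ k : s₁ ⟶ u'⟦i - 1⟧, (shiftFunctor C (1 : ℤ)).map k = g ≫ e.hom :=
    ⟨(shiftFunctor C (1 : ℤ)).preimage (g ≫ e.hom), (shiftFunctor C (1 : ℤ)).map_preimage _⟩
  obtain ⟨k, hk⟩ := hfull
  have hk0 : k = 0 := hom_zero_aux S hS hs₁ hu' (i - 1) (by omega) k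
  have hge : g ≫ e.hom = 0 := by rw [← hk, hk0, Functor.map_zero]; rfl
  have hg0 : g = 0 := by
    have := hge =≫ e.inv
    simpa using this
  rw [hg, hg0, comp_zero]; rfl
end

section
/- Let T be a triangulated category, S a presilting subcategory of T, and u, u' objects of S * ΣS with distinguished triangles s₁ → s₀ → u → Σs₁ (with s₀, s₁ ∈ S) and likewise for u'. Then Hom_T(u, Σu') = 0 if and only if the induced map Hom_T(s₀, u') → Hom_T(s₁, u') (given by precomposition with s₁ → s₀) is surjective. -/
open CategoryTheory Category Limits Pretriangulated

variable {C : Type*} [Category C] [Preadditive C] [HasZeroObject C] [HasShift C ℤ]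
  [∀ n : ℤ, (shiftFunctor C n).Additive] [Pretriangulated C]

lemma hom_to_shift_twoTerm_eq_zero (S : Set C) (hS : PresiltingSet S) {s u' : C}
    (hs : s ∈ S) (hu' : u' ∈ twoTermSet S) (φ : s ⟶ u'⟦(1 : ℤ)⟧) : φ = 0 := by
  obtain ⟨t₁, t₀, ht₁, ht₀, f', g', h', htri'⟩ := hu'
  have htri'' := rot_of_distTriang _ (rot_of_distTriang _ htri')
  have hcond : φ ≫ h'⟦(1 : ℤ)⟧' = 0 := by
    rw [← cancel_mono ((shiftFunctorAdd' C 1 1 2 rfl).inv.app t₁), zero_comp, assoc]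
    exact hS s hs t₁ ht₁ 2 (by norm_num)
      (φ ≫ h'⟦(1 : ℤ)⟧' ≫ (shiftFunctorAdd' C 1 1 2 rfl).inv.app t₁)
  obtain ⟨ψ, hψ⟩ := Triangle.coyoneda_exact₁ _ htri'' φ hcond
  have hψ0 : ψ = 0 := hS s hs t₀ ht₀ 1 le_rfl ψ
  rw [hψ, hψ0, zero_comp]
  rfl

/-- Let `S` be presilting, `u ∈ S * ΣS` with distinguished triangle
`s₁ →σ s₀ → u → Σs₁` (`s₀, s₁ ∈ S`), and `u' ∈ S * ΣS`.  Then `Hom(u, Σu') = 0`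
iff precomposition with `σ` gives a surjection `Hom(s₀, u') → Hom(s₁, u')`. -/
theorem stmt_7 (S : Set C) (hS : PresiltingSet S) (u u' : C)
    (s₁ s₀ : C) (hs₁ : s₁ ∈ S) (hs₀ : s₀ ∈ S)
    (σ : s₁ ⟶ s₀) (g : s₀ ⟶ u) (h : u ⟶ s₁⟦(1 : ℤ)⟧)
    (htri : Triangle.mk σ g h ∈ distTriang C)
    (hu' : u' ∈ twoTermSet S) :
    (∀ f : u ⟶ u'⟦(1 : ℤ)⟧, f = 0) ↔
    (∀ f : s₁ ⟶ u', ∃ a : s₀ ⟶ u', σ ≫ a = f) := by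
  constructor
  · intro H f
    have hz : h ≫ f⟦(1 : ℤ)⟧' = 0 := H _
    obtain ⟨b, hb⟩ := Triangle.yoneda_exact₂ _
      (rot_of_distTriang _ (rot_of_distTriang _ htri)) (f⟦(1 : ℤ)⟧') hz
    obtain ⟨a, ha⟩ := (shiftFunctor C (1 : ℤ)).map_surjective (X := s₀) (Y := u') b
    refine ⟨-a, (shiftFunctor C (1 : ℤ)).map_injective ?_⟩
    erw [Functor.map_comp, Functor.map_neg, ha, hb]
    simp [Triangle.rotate, Preadditive.neg_comp, Preadditive.comp_neg]
    exact (Preadditive.comp_neg _ _).trans (Preadditive.neg_comp _ _).symm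
  · intro H f
    have hgf : g ≫ f = 0 := hom_to_shift_twoTerm_eq_zero S hS hs₀ hu' (g ≫ f)
    obtain ⟨φ, hφ⟩ := Triangle.yoneda_exact₂ _ (rot_of_distTriang _ htri) f hgf
    obtain ⟨ψ, hψ⟩ := (shiftFunctor C (1 : ℤ)).map_surjective (X := s₁) (Y := u') φ
    obtain ⟨a, ha⟩ := H ψ
    have h31 : h ≫ σ⟦(1 : ℤ)⟧' = 0 := comp_distTriang_mor_zero₃₁ _ htri
    erw [hφ, ← hψ, ← ha, Functor.map_comp, ← assoc]
    change (h ≫ σ⟦(1 : ℤ)⟧' ) ≫ _ = 0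
    rw [h31, zero_comp]
end

section
/- Let k be a commutative noetherian local ring and C an essentially small, Krull–Schmidt, k-linear, Hom-finite category. Let m be an object of mod C with a minimal projective presentation 0 → Ω²m → P₁ →^{d₁} P₀ → m → 0, and suppose for every m' in a subcategory M ⊆ mod C containing m, and every morphism f : P₁ → m', there exist a : P₀ → m' and b : P₁ → Ω²m with f = a∘d₁ + f∘d₂∘b (where d₂ : Ω²m → P₁ is the inclusion). Then every f : P₁ → m' with m' ∈ M factors through d₁; that is, Hom(P₁, m') = Hom(P₀, m')∘d₁. -/
open CategoryTheory Category Limits Opposite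

universe v u

variable {C : Type u} [Category.{v} C] [Preadditive C] [HasFiniteBiproducts C]

/-- `Mod C`: contravariant additive-group-valued functors on `C`. -/
abbrev ModCat (C : Type u) [Category.{v} C] : Type _ := Cᵒᵖ ⥤ AddCommGrpCat.{v}

/-- A functor is finitely presented if it is the cokernel of a morphism of
representable functors. -/
def FinPres (F : ModCat C) : Prop :=
  ∃ (c₁ c₀ : C) (f : preadditiveYoneda.obj c₁ ⟶ preadditiveYoneda.obj c₀)
    (g : preadditiveYoneda.obj c₀ ⟶ F) (w : f ≫ g = 0),
    Epi g ∧ (ShortComplex.mk f g w).Exact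

/-- `Fac M`: factor objects of objects of `M`. -/
def Fac (M : Set (ModCat C)) : Set (ModCat C) :=
  {n | ∃ m ∈ M, ∃ p : m ⟶ n, Epi p}

/-- `Ext¹(m, n) = 0`, expressed as: every short exact sequence
`0 → n → y → m → 0` splits. -/
def Ext1Vanish (m n : ModCat C) : Prop :=
  ∀ S : ShortComplex (ModCat C), S.ShortExact →
    Nonempty (S.X₁ ≅ n) → Nonempty (S.X₃ ≅ m) →
    ∃ r : S.X₂ ⟶ S.X₁, S.f ≫ r = 𝟙 S.X₁

/-- `M` is τ-rigid: each `m ∈ M` has a projective presentation by representables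
whose presenting map satisfies Property (S) with respect to all of `M`. -/
def TauRigid (M : Set (ModCat C)) : Prop :=
  ∀ m ∈ M, ∃ (c₁ c₀ : C) (π : preadditiveYoneda.obj c₁ ⟶ preadditiveYoneda.obj c₀)
    (g : preadditiveYoneda.obj c₀ ⟶ m) (w : π ≫ g = 0),
    Epi g ∧ (ShortComplex.mk π g w).Exact ∧
    ∀ m' ∈ M, ∀ f : preadditiveYoneda.obj c₁ ⟶ m',
      ∃ a : preadditiveYoneda.obj c₀ ⟶ m', π ≫ a = f

/-- Krull–Schmidt: every object is a finite direct sum of objects with local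
endomorphism rings. -/
def KrullSchmidt (C : Type u) [Category.{v} C] [Preadditive C] [HasFiniteBiproducts C] : Prop :=
  ∀ x : C, ∃ (n : ℕ) (f : Fin n → C),
    (∀ i, IsLocalRing (End (f i))) ∧ Nonempty (x ≅ ⨁ f)

/-- `f : X ⟶ Y` lies in the radical of the category. -/
def InRadical {X Y : ModCat C} (f : X ⟶ Y) : Prop :=
  ∀ g : Y ⟶ X, IsIso (𝟙 X - f ≫ g)

/-- Given a minimal projective presentation `0 → Ω²m → P₁ →d₁ P₀ → m → 0` of
`m ∈ M` such that every `f : P₁ → m'` (`m' ∈ M`) can be written `f = a∘d₁ + f∘d₂∘b`,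
every such `f` factors through `d₁`. -/
theorem stmt_13 (k : Type*) [CommRing k] [IsNoetherianRing k] [IsLocalRing k]
    [Linear k C] [EssentiallySmall.{v} C]
    (hfin : ∀ X Y : C, Module.Finite k (X ⟶ Y))
    (hKS : KrullSchmidt C)
    (M : Set (ModCat C)) (hM : ∀ x ∈ M, FinPres x)
    (m : ModCat C) (hm : m ∈ M)
    (c₁ c₀ : C) (K : ModCat C)
    (d₂ : K ⟶ preadditiveYoneda.obj c₁)
    (d₁ : preadditiveYoneda.obj c₁ ⟶ preadditiveYoneda.obj c₀)
    (e : preadditiveYoneda.obj c₀ ⟶ m)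
    (hmono : Mono d₂) (hepi : Epi e)
    (w₂ : d₂ ≫ d₁ = 0) (hex₂ : (ShortComplex.mk d₂ d₁ w₂).Exact)
    (w₁ : d₁ ≫ e = 0) (hex₁ : (ShortComplex.mk d₁ e w₁).Exact)
    (hmin₁ : InRadical d₁) (hmin₂ : InRadical d₂)
    (hyp : ∀ m' ∈ M, ∀ f : preadditiveYoneda.obj c₁ ⟶ m',
      ∃ (a : preadditiveYoneda.obj c₀ ⟶ m') (b : preadditiveYoneda.obj c₁ ⟶ K),
        f = d₁ ≫ a + b ≫ d₂ ≫ f) :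
    ∀ m' ∈ M, ∀ f : preadditiveYoneda.obj c₁ ⟶ m',
      ∃ a : preadditiveYoneda.obj c₀ ⟶ m', d₁ ≫ a = f := by
  intro m' hm' f
  obtain ⟨a, b, hf⟩ := hyp m' hm' f
  have hiso : IsIso (𝟙 K - d₂ ≫ b) := hmin₂ b
  set j : K ⟶ K := inv (𝟙 K - d₂ ≫ b) with hj
  have hj1 : (𝟙 K - d₂ ≫ b) ≫ j = 𝟙 K := IsIso.hom_inv_id _
  have hj2 : j ≫ (𝟙 K - d₂ ≫ b) = 𝟙 K := IsIso.inv_hom_id _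
  set u : preadditiveYoneda.obj c₁ ⟶ preadditiveYoneda.obj c₁ := 𝟙 _ - b ≫ d₂ with hu
  set v : preadditiveYoneda.obj c₁ ⟶ preadditiveYoneda.obj c₁ := 𝟙 _ + b ≫ j ≫ d₂ with hv
  have hj1' : j - d₂ ≫ b ≫ j = 𝟙 K := by
    rw [← hj1]; simp [Preadditive.sub_comp, assoc]
  have hj2' : j - j ≫ d₂ ≫ b = 𝟙 K := by
    rw [← hj2]; simp [Preadditive.comp_sub, assoc]
  have huv : u ≫ v = 𝟙 _ := by
    have : u ≫ v = 𝟙 _ + b ≫ (j - d₂ ≫ b ≫ j) ≫ d₂ - b ≫ d₂ := by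
      simp [hu, hv, Preadditive.sub_comp, Preadditive.comp_add, Preadditive.add_comp, Preadditive.comp_sub, assoc]
      abel
    rw [this, hj1']
    simp
  have hvu : v ≫ u = 𝟙 _ := by
    have : v ≫ u = 𝟙 _ + b ≫ (j - j ≫ d₂ ≫ b) ≫ d₂ - b ≫ d₂ := by
      simp [hu, hv, Preadditive.sub_comp, Preadditive.comp_add, Preadditive.add_comp, Preadditive.comp_sub, assoc]
      abel
    rw [this, hj2']
    simp
  have hud₁ : u ≫ d₁ = d₁ := by
    simp [hu, Preadditive.sub_comp, assoc, w₂]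
  have hvd₁ : v ≫ d₁ = d₁ := by
    calc v ≫ d₁ = v ≫ u ≫ d₁ := by rw [hud₁]
    _ = d₁ := by rw [← assoc, hvu, id_comp]
  have huf : u ≫ f = d₁ ≫ a := by
    have h : u ≫ f = f - b ≫ d₂ ≫ f := by simp [hu, Preadditive.sub_comp, assoc]
    rw [h]
    nth_rewrite 1 [hf]
    abel
  refine ⟨a, ?_⟩
  calc d₁ ≫ a = v ≫ d₁ ≫ a := by rw [← assoc, hvd₁]
  _ = v ≫ u ≫ f := by rw [huf]
  _ = f := by rw [← assoc, hvu, id_comp]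
end
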